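/- arXiv:1503.05218 — 3 statements merged into one kernel-verified Lean document; each statement's English description precedes it below -/
import Mathlib

section
/- (Taylor expansion, right version.) Let ζ₀ ∈ E₃, ξ₁₀ = f₁(ζ₀), ξ₂₀ = f₂(ζ₀), and R > 0. Let F₁, F₃ be holomorphic on the disk U(ξ₁₀, R) = {ξ ∈ ℂ : |ξ − ξ₁₀| < R} and F₂, F₄ holomorphic on U(ξ₂₀, R), and define Φ on B(ζ₀, R) = {ζ ∈ E₃ : |f₁(ζ) − ξ₁₀| < R, |f₂(ζ) − ξ₂₀| < R} by Φ(ζ) = F₁(ξ₁)e₁ + F₂(ξ₂)e₂ + F₃(ξ₁)e₃ + F₄(ξ₂)e₄ with ξ₁ = f₁(ζ), ξ₂ = f₂(ζ). Then for every ζ ∈ B(ζ₀, R) the power series ∑_{n=0}^∞ (ζ − ζ₀)ⁿ pₙ, with pₙ = aₙe₁ + bₙe₂ + cₙe₃ + dₙe₄ where aₙ = F₁⁽ⁿ⁾(ξ₁₀)/n!, bₙ = F₂⁽ⁿ⁾(ξ₂₀)/n!, cₙ = F₃⁽ⁿ⁾(ξ₁₀)/n!, dₙ = F₄⁽ⁿ⁾(ξ₂₀)/n!,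 converges absolutely in the norm of ℍ(ℂ) and its sum equals Φ(ζ). -/
noncomputable section

/-- The algebra of complex quaternions ℍ(ℂ): quaternions over ℂ with
I² = J² = K² = -1, IJ = -JI = K, JK = -KJ = I, KI = -IK = J. -/
abbrev HC : Type := Quaternion ℂ

/-- The quaternion unit I. -/
def Iq : HC := ⟨0, 1, 0, 0⟩
/-- The quaternion unit J. -/
def Jq : HC := ⟨0, 0, 1, 0⟩
/-- The quaternion unit K. -/
def Kq : HC := ⟨0, 0, 0, 1⟩

/-- e₁ = (1 + iI)/2. -/
def e1 : HC := (2 : ℂ)⁻¹ • (1 + Complex.I • Iq)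
/-- e₂ = (1 - iI)/2. -/
def e2 : HC := (2 : ℂ)⁻¹ • (1 - Complex.I • Iq)
/-- e₃ = (iJ - K)/2. -/
def e3 : HC := (2 : ℂ)⁻¹ • (Complex.I • Jq - Kq)
/-- e₄ = (iJ + K)/2. -/
def e4 : HC := (2 : ℂ)⁻¹ • (Complex.I • Jq + Kq)

/-- The coefficient c₁ of q in the basis {e₁,e₂,e₃,e₄} (q = c₁e₁ + c₂e₂ + c₃e₃ + c₄e₄). -/
def coord1 (q : HC) : ℂ := q.re - Complex.I * q.imI
/-- The coefficient c₂ of q in the basis {e₁,e₂,e₃,e₄}. -/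
def coord2 (q : HC) : ℂ := q.re + Complex.I * q.imI
/-- The coefficient c₃ of q in the basis {e₁,e₂,e₃,e₄}. -/
def coord3 (q : HC) : ℂ := -(Complex.I * q.imJ) - q.imK
/-- The coefficient c₄ of q in the basis {e₁,e₂,e₃,e₄}. -/
def coord4 (q : HC) : ℂ := -(Complex.I * q.imJ) + q.imK

/-- The norm ‖c‖ = √(|c₁|² + |c₂|² + |c₃|² + |c₄|²) of c = c₁e₁ + c₂e₂ + c₃e₃ + c₄e₄. -/
def hnorm (q : HC) : ℝ :=
  Real.sqrt (‖coord1 q‖ ^ 2 + ‖coord2 q‖ ^ 2 +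
    ‖coord3 q‖ ^ 2 + ‖coord4 q‖ ^ 2)

/-- i₂ = a₁e₁ + a₂e₂. -/
def i2 (a₁ a₂ : ℂ) : HC := a₁ • e1 + a₂ • e2
/-- i₃ = b₁e₁ + b₂e₂. -/
def i3 (b₁ b₂ : ℂ) : HC := b₁ • e1 + b₂ • e2

/-- ζ = x·i₁ + y·i₂ + z·i₃ with i₁ = 1. -/
def zeta (a₁ a₂ b₁ b₂ : ℂ) (x y z : ℝ) : HC :=
  (x : ℂ) • (1 : HC) + (y : ℂ) • i2 a₁ a₂ + (z : ℂ) • i3 b₁ b₂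

/-- E₃ = {x i₁ + y i₂ + z i₃ : x, y, z ∈ ℝ}. -/
def E3 (a₁ a₂ b₁ b₂ : ℂ) : Set HC :=
  {q | ∃ x y z : ℝ, q = zeta a₁ a₂ b₁ b₂ x y z}

/-- ξ₁ = f₁(ζ) = x + y a₁ + z b₁. -/
def xi1 (a₁ b₁ : ℂ) (x y z : ℝ) : ℂ := (x : ℂ) + (y : ℂ) * a₁ + (z : ℂ) * b₁
/-- ξ₂ = f₂(ζ) = x + y a₂ + z b₂. -/
def xi2 (a₂ b₂ : ℂ) (x y z : ℝ) : ℂ := (x : ℂ) + (y : ℂ) * a₂ + (z : ℂ) * b₂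

/-- A series ∑ f n converges (partial sums) to s in the norm of ℍ(ℂ). -/
def SeriesTendsto (f : ℕ → HC) (s : HC) : Prop :=
  Filter.Tendsto (fun N : ℕ => hnorm ((∑ n ∈ Finset.range N, f n) - s))
    Filter.atTop (nhds 0)

lemma Iq_parts : Iq.re = 0 ∧ Iq.imI = 1 ∧ Iq.imJ = 0 ∧ Iq.imK = 0 := ⟨rfl, rfl, rfl, rfl⟩
lemma Jq_parts : Jq.re = 0 ∧ Jq.imI = 0 ∧ Jq.imJ = 1 ∧ Jq.imK = 0 := ⟨rfl, rfl, rfl, rfl⟩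
lemma Kq_parts : Kq.re = 0 ∧ Kq.imI = 0 ∧ Kq.imJ = 0 ∧ Kq.imK = 1 := ⟨rfl, rfl, rfl, rfl⟩

/-- auxiliary: q = a e₁ + b e₂ + c e₃ + d e₄. -/
def comb (a b c d : ℂ) : HC := a • e1 + b • e2 + c • e3 + d • e4

lemma coord1_comb (a b c d : ℂ) : coord1 (comb a b c d) = a := by
  simp [Quaternion.re_one, Quaternion.imI_one, Quaternion.imJ_one, Quaternion.imK_one, Quaternion.re_smul, Quaternion.imI_smul, Quaternion.imJ_smul, Quaternion.imK_smul, comb, coord1, e1, e2, e3, e4, Iq_parts, Jq_parts, Kq_parts]; ring_nf; simp [Complex.I_sq]; ring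
lemma coord2_comb (a b c d : ℂ) : coord2 (comb a b c d) = b := by
  simp [Quaternion.re_one, Quaternion.imI_one, Quaternion.imJ_one, Quaternion.imK_one, Quaternion.re_smul, Quaternion.imI_smul, Quaternion.imJ_smul, Quaternion.imK_smul, comb, coord2, e1, e2, e3, e4, Iq_parts, Jq_parts, Kq_parts]; ring_nf; simp [Complex.I_sq]; ring
lemma coord3_comb (a b c d : ℂ) : coord3 (comb a b c d) = c := by
  simp [Quaternion.re_one, Quaternion.imI_one, Quaternion.imJ_one, Quaternion.imK_one, Quaternion.re_smul, Quaternion.imI_smul, Quaternion.imJ_smul, Quaternion.imK_smul, comb, coord3, e1, e2, e3, e4, Iq_parts, Jq_parts, Kq_parts]; ring_nf; simp [Complex.I_sq]; ring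
lemma coord4_comb (a b c d : ℂ) : coord4 (comb a b c d) = d := by
  simp [Quaternion.re_one, Quaternion.imI_one, Quaternion.imJ_one, Quaternion.imK_one, Quaternion.re_smul, Quaternion.imI_smul, Quaternion.imJ_smul, Quaternion.imK_smul, comb, coord4, e1, e2, e3, e4, Iq_parts, Jq_parts, Kq_parts]; ring_nf; simp [Complex.I_sq]; ring

lemma hnorm_comb (a b c d : ℂ) : hnorm (comb a b c d) =
    Real.sqrt (‖a‖ ^ 2 + ‖b‖ ^ 2 + ‖c‖ ^ 2 + ‖d‖ ^ 2) := by
  rw [hnorm, coord1_comb, coord2_comb, coord3_comb, coord4_comb]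

lemma mul_comb (u v a b c d : ℂ) : comb u v 0 0 * comb a b c d = comb (u*a) (v*b) (u*c) (v*d) := by
  simp [Quaternion.re_one, Quaternion.imI_one, Quaternion.imJ_one, Quaternion.imK_one, Quaternion.re_smul, Quaternion.imI_smul, Quaternion.imJ_smul, Quaternion.imK_smul, comb, e1, e2, e3, e4, Iq_parts, Jq_parts, Kq_parts, Quaternion.ext_iff]
  ring_nf
  simp [Complex.I_sq]
  ring_nf
  simp

lemma one_comb : (1 : HC) = comb 1 1 0 0 := by
  simp [Quaternion.re_one, Quaternion.imI_one, Quaternion.imJ_one, Quaternion.imK_one, Quaternion.re_smul, Quaternion.imI_smul, Quaternion.imJ_smul, Quaternion.imK_smul, comb, e1, e2, e3, e4, Iq_parts, Jq_parts, Kq_parts, Quaternion.ext_iff]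
  norm_num

lemma pow_comb (u v : ℂ) (n : ℕ) : comb u v 0 0 ^ n = comb (u^n) (v^n) 0 0 := by
  induction n with
  | zero => simpa using one_comb
  | succ n ih =>
      rw [pow_succ, ih, mul_comb]; simp [pow_succ]

lemma sub_comb (a b c d a' b' c' d' : ℂ) :
    comb a b c d - comb a' b' c' d' = comb (a-a') (b-b') (c-c') (d-d') := by
  simp only [comb]; module

lemma zeta_comb (a₁ a₂ b₁ b₂ : ℂ) (x y z : ℝ) :
    zeta a₁ a₂ b₁ b₂ x y z = comb (xi1 a₁ b₁ x y z) (xi2 a₂ b₂ x y z) 0 0 := by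
  rw [zeta, one_comb]
  simp only [i2, i3, comb, xi1, xi2]
  module

lemma sum_comb (A B C D : ℕ → ℂ) (N : ℕ) :
    ∑ n ∈ Finset.range N, comb (A n) (B n) (C n) (D n) =
      comb (∑ n ∈ Finset.range N, A n) (∑ n ∈ Finset.range N, B n)
           (∑ n ∈ Finset.range N, C n) (∑ n ∈ Finset.range N, D n) := by
  simp only [comb, Finset.sum_add_distrib]
  rw [(Finset.sum_smul (f := A) (s := Finset.range N) (x := e1)).symm,
    (Finset.sum_smul (f := B) (s := Finset.range N) (x := e2)).symm,
    (Finset.sum_smul (f := C) (s := Finset.range N) (x := e3)).symm,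
    (Finset.sum_smul (f := D) (s := Finset.range N) (x := e4)).symm]

/-- Taylor expansion, right version: if F₁, F₃ are holomorphic on
U(ξ₁₀,R) and F₂, F₄ on U(ξ₂₀,R), and Φ(ζ) = F₁(ξ₁)e₁ + F₂(ξ₂)e₂ + F₃(ξ₁)e₃ + F₄(ξ₂)e₄,
then for every ζ ∈ B(ζ₀,R) the series ∑ₙ (ζ-ζ₀)ⁿpₙ with pₙ = aₙe₁ + bₙe₂ + cₙe₃ + dₙe₄,
aₙ = F₁⁽ⁿ⁾(ξ₁₀)/n!, bₙ = F₂⁽ⁿ⁾(ξ₂₀)/n!, cₙ = F₃⁽ⁿ⁾(ξ₁₀)/n!, dₙ = F₄⁽ⁿ⁾(ξ₂₀)/n!,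
converges absolutely in the norm of ℍ(ℂ) and its sum is Φ(ζ). -/
theorem taylor_right (a₁ a₂ b₁ b₂ : ℂ) (x₀ y₀ z₀ : ℝ) (R : ℝ) (hR : 0 < R)
    (F₁ F₂ F₃ F₄ : ℂ → ℂ)
    (hF₁ : DifferentiableOn ℂ F₁ (Metric.ball (xi1 a₁ b₁ x₀ y₀ z₀) R))
    (hF₃ : DifferentiableOn ℂ F₃ (Metric.ball (xi1 a₁ b₁ x₀ y₀ z₀) R))
    (hF₂ : DifferentiableOn ℂ F₂ (Metric.ball (xi2 a₂ b₂ x₀ y₀ z₀) R))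
    (hF₄ : DifferentiableOn ℂ F₄ (Metric.ball (xi2 a₂ b₂ x₀ y₀ z₀) R))
    (x y z : ℝ)
    (h₁ : ‖xi1 a₁ b₁ x y z - xi1 a₁ b₁ x₀ y₀ z₀‖ < R)
    (h₂ : ‖xi2 a₂ b₂ x y z - xi2 a₂ b₂ x₀ y₀ z₀‖ < R) :
    Summable (fun n : ℕ =>
      hnorm ((zeta a₁ a₂ b₁ b₂ x y z - zeta a₁ a₂ b₁ b₂ x₀ y₀ z₀) ^ n *
        ((iteratedDeriv n F₁ (xi1 a₁ b₁ x₀ y₀ z₀) / (Nat.factorial n : ℂ)) • e1 +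
         (iteratedDeriv n F₂ (xi2 a₂ b₂ x₀ y₀ z₀) / (Nat.factorial n : ℂ)) • e2 +
         (iteratedDeriv n F₃ (xi1 a₁ b₁ x₀ y₀ z₀) / (Nat.factorial n : ℂ)) • e3 +
         (iteratedDeriv n F₄ (xi2 a₂ b₂ x₀ y₀ z₀) / (Nat.factorial n : ℂ)) • e4))) ∧
    SeriesTendsto (fun n : ℕ =>
      (zeta a₁ a₂ b₁ b₂ x y z - zeta a₁ a₂ b₁ b₂ x₀ y₀ z₀) ^ n *
        ((iteratedDeriv n F₁ (xi1 a₁ b₁ x₀ y₀ z₀) / (Nat.factorial n : ℂ)) • e1 +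
         (iteratedDeriv n F₂ (xi2 a₂ b₂ x₀ y₀ z₀) / (Nat.factorial n : ℂ)) • e2 +
         (iteratedDeriv n F₃ (xi1 a₁ b₁ x₀ y₀ z₀) / (Nat.factorial n : ℂ)) • e3 +
         (iteratedDeriv n F₄ (xi2 a₂ b₂ x₀ y₀ z₀) / (Nat.factorial n : ℂ)) • e4))
      (F₁ (xi1 a₁ b₁ x y z) • e1 + F₂ (xi2 a₂ b₂ x y z) • e2 +
       F₃ (xi1 a₁ b₁ x y z) • e3 + F₄ (xi2 a₂ b₂ x y z) • e4) := by
  set ξ₁ := xi1 a₁ b₁ x y z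
  set ξ₂ := xi2 a₂ b₂ x y z
  set ξ₁₀ := xi1 a₁ b₁ x₀ y₀ z₀
  set ξ₂₀ := xi2 a₂ b₂ x₀ y₀ z₀
  set u := ξ₁ - ξ₁₀ with hu
  set v := ξ₂ - ξ₂₀ with hv
  set A : ℕ → ℂ := fun n => u ^ n * (iteratedDeriv n F₁ ξ₁₀ / (Nat.factorial n : ℂ)) with hA
  set B : ℕ → ℂ := fun n => v ^ n * (iteratedDeriv n F₂ ξ₂₀ / (Nat.factorial n : ℂ)) with hB
  set C : ℕ → ℂ := fun n => u ^ n * (iteratedDeriv n F₃ ξ₁₀ / (Nat.factorial n : ℂ)) with hC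
  set D : ℕ → ℂ := fun n => v ^ n * (iteratedDeriv n F₄ ξ₂₀ / (Nat.factorial n : ℂ)) with hD
  have hmem₁ : ξ₁ ∈ Metric.ball ξ₁₀ R := by rwa [Metric.mem_ball, Complex.dist_eq]
  have hmem₂ : ξ₂ ∈ Metric.ball ξ₂₀ R := by rwa [Metric.mem_ball, Complex.dist_eq]
  have hSA : HasSum A (F₁ ξ₁) := by
    have := Complex.hasSum_taylorSeries_on_ball hF₁ hmem₁
    refine this.congr_fun fun n => ?_
    simp [hA, smul_eq_mul]; ring
  have hSB : HasSum B (F₂ ξ₂) := by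
    have := Complex.hasSum_taylorSeries_on_ball hF₂ hmem₂
    refine this.congr_fun fun n => ?_
    simp [hB, smul_eq_mul]; ring
  have hSC : HasSum C (F₃ ξ₁) := by
    have := Complex.hasSum_taylorSeries_on_ball hF₃ hmem₁
    refine this.congr_fun fun n => ?_
    simp [hC, smul_eq_mul]; ring
  have hSD : HasSum D (F₄ ξ₂) := by
    have := Complex.hasSum_taylorSeries_on_ball hF₄ hmem₂
    refine this.congr_fun fun n => ?_
    simp [hD, smul_eq_mul]; ring
  -- rewrite the general term
  have hterm : ∀ n : ℕ,
      (zeta a₁ a₂ b₁ b₂ x y z - zeta a₁ a₂ b₁ b₂ x₀ y₀ z₀) ^ n *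
        ((iteratedDeriv n F₁ ξ₁₀ / (Nat.factorial n : ℂ)) • e1 +
         (iteratedDeriv n F₂ ξ₂₀ / (Nat.factorial n : ℂ)) • e2 +
         (iteratedDeriv n F₃ ξ₁₀ / (Nat.factorial n : ℂ)) • e3 +
         (iteratedDeriv n F₄ ξ₂₀ / (Nat.factorial n : ℂ)) • e4) =
      comb (A n) (B n) (C n) (D n) := by
    intro n
    have hz : zeta a₁ a₂ b₁ b₂ x y z - zeta a₁ a₂ b₁ b₂ x₀ y₀ z₀ = comb u v 0 0 := by
      rw [zeta_comb, zeta_comb, sub_comb]; simp only [sub_self]; rfl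
    rw [hz, pow_comb,
      show (iteratedDeriv n F₁ ξ₁₀ / (Nat.factorial n : ℂ)) • e1 +
         (iteratedDeriv n F₂ ξ₂₀ / (Nat.factorial n : ℂ)) • e2 +
         (iteratedDeriv n F₃ ξ₁₀ / (Nat.factorial n : ℂ)) • e3 +
         (iteratedDeriv n F₄ ξ₂₀ / (Nat.factorial n : ℂ)) • e4 =
        comb (iteratedDeriv n F₁ ξ₁₀ / (Nat.factorial n : ℂ))
          (iteratedDeriv n F₂ ξ₂₀ / (Nat.factorial n : ℂ))
          (iteratedDeriv n F₃ ξ₁₀ / (Nat.factorial n : ℂ))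
          (iteratedDeriv n F₄ ξ₂₀ / (Nat.factorial n : ℂ)) from rfl,
      mul_comb]
  have habsA : Summable (fun n => ‖A n‖) := by
    simpa using (summable_norm_iff.mpr hSA.summable)
  have habsB : Summable (fun n => ‖B n‖) := by
    simpa using (summable_norm_iff.mpr hSB.summable)
  have habsC : Summable (fun n => ‖C n‖) := by
    simpa using (summable_norm_iff.mpr hSC.summable)
  have habsD : Summable (fun n => ‖D n‖) := by
    simpa using (summable_norm_iff.mpr hSD.summable)
  constructor
  · -- summability of hnorms
    have hle : ∀ n : ℕ,
        hnorm (comb (A n) (B n) (C n) (D n)) ≤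
          ‖A n‖ + ‖B n‖ + ‖C n‖ + ‖D n‖ := by
      intro n
      rw [hnorm_comb]
      have h0 : ∀ w : ℂ, 0 ≤ ‖w‖ := fun w => norm_nonneg w
      have := h0 (A n); have := h0 (B n); have := h0 (C n); have := h0 (D n)
      calc Real.sqrt (‖A n‖ ^ 2 + ‖B n‖ ^ 2 +
            ‖C n‖ ^ 2 + ‖D n‖ ^ 2)
          ≤ Real.sqrt ((‖A n‖ + ‖B n‖ + ‖C n‖ +
              ‖D n‖) ^ 2) := by
            apply Real.sqrt_le_sqrt; nlinarith
        _ = _ := Real.sqrt_sq (by positivity)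
    refine Summable.of_nonneg_of_le (fun n => ?_) (fun n => ?_)
      (((habsA.add habsB).add habsC).add habsD)
    · rw [hterm n, hnorm_comb]; positivity
    · rw [hterm n]; exact hle n
  · -- convergence of partial sums
    unfold SeriesTendsto
    have hsum : ∀ N : ℕ,
        (∑ n ∈ Finset.range N, (zeta a₁ a₂ b₁ b₂ x y z - zeta a₁ a₂ b₁ b₂ x₀ y₀ z₀) ^ n *
          ((iteratedDeriv n F₁ ξ₁₀ / (Nat.factorial n : ℂ)) • e1 +
           (iteratedDeriv n F₂ ξ₂₀ / (Nat.factorial n : ℂ)) • e2 +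
           (iteratedDeriv n F₃ ξ₁₀ / (Nat.factorial n : ℂ)) • e3 +
           (iteratedDeriv n F₄ ξ₂₀ / (Nat.factorial n : ℂ)) • e4)) -
        (F₁ ξ₁ • e1 + F₂ ξ₂ • e2 + F₃ ξ₁ • e3 + F₄ ξ₂ • e4) =
        comb ((∑ n ∈ Finset.range N, A n) - F₁ ξ₁) ((∑ n ∈ Finset.range N, B n) - F₂ ξ₂)
             ((∑ n ∈ Finset.range N, C n) - F₃ ξ₁) ((∑ n ∈ Finset.range N, D n) - F₄ ξ₂) := by
      intro N
      rw [Finset.sum_congr rfl (fun n _ => hterm n), sum_comb,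
        show F₁ ξ₁ • e1 + F₂ ξ₂ • e2 + F₃ ξ₁ • e3 + F₄ ξ₂ • e4 =
          comb (F₁ ξ₁) (F₂ ξ₂) (F₃ ξ₁) (F₄ ξ₂) from rfl, sub_comb]
    simp only [hsum, hnorm_comb]
    have habs : ∀ (f : ℕ → ℂ) (l : ℂ), HasSum f l →
        Filter.Tendsto (fun N => ‖(∑ n ∈ Finset.range N, f n) - l‖)
          Filter.atTop (nhds 0) := by
      intro f l hf
      have h1 : Filter.Tendsto (fun N => (∑ n ∈ Finset.range N, f n) - l)
          Filter.atTop (nhds 0) := by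
        have h1 := hf.tendsto_sum_nat.sub (tendsto_const_nhds (x := l))
        rwa [sub_self] at h1
      simpa using h1.norm
    have hA' := habs A (F₁ ξ₁) hSA
    have hB' := habs B (F₂ ξ₂) hSB
    have hC' := habs C (F₃ ξ₁) hSC
    have hD' := habs D (F₄ ξ₂) hSD
    have hin : Filter.Tendsto (fun N =>
        ‖(∑ n ∈ Finset.range N, A n) - F₁ ξ₁‖ ^ 2 +
        ‖(∑ n ∈ Finset.range N, B n) - F₂ ξ₂‖ ^ 2 +
        ‖(∑ n ∈ Finset.range N, C n) - F₃ ξ₁‖ ^ 2 +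
        ‖(∑ n ∈ Finset.range N, D n) - F₄ ξ₂‖ ^ 2) Filter.atTop (nhds 0) := by
      have := (((hA'.pow 2).add (hB'.pow 2)).add (hC'.pow 2)).add (hD'.pow 2)
      simpa using this
    have := (Real.continuous_sqrt.tendsto 0).comp hin
    simpa [Function.comp_def] using this
end
end

section
/- (Taylor expansion, left version.) Let ζ₀ ∈ E₃, ξ₁₀ = f₁(ζ₀), ξ₂₀ = f₂(ζ₀), and R > 0. Let F̂₁, F̂₄ be holomorphic on the disk U(ξ₁₀, R) = {ξ ∈ ℂ : |ξ − ξ₁₀| < R} and F̂₂, F̂₃ holomorphic on U(ξ₂₀, R), and define Φ̂ on B(ζ₀, R) = {ζ ∈ E₃ : |f₁(ζ) − ξ₁₀| < R, |f₂(ζ) − ξ₂₀| < R} by Φ̂(ζ) = F̂₁(ξ₁)e₁ + F̂₂(ξ₂)e₂ + F̂₃(ξ₂)e₃ + F̂₄(ξ₁)e₄ with ξ₁ = f₁(ζ), ξ₂ = f₂(ζ). Then for every ζ ∈ B(ζ₀, R) the power series ∑_{n=0}^∞ p̂ₙ (ζ − ζ₀)ⁿ, with p̂ₙ = âₙe₁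 + b̂ₙe₂ + ĉₙe₃ + d̂ₙe₄ where âₙ = F̂₁⁽ⁿ⁾(ξ₁₀)/n!, b̂ₙ = F̂₂⁽ⁿ⁾(ξ₂₀)/n!, ĉₙ = F̂₃⁽ⁿ⁾(ξ₂₀)/n!, d̂ₙ = F̂₄⁽ⁿ⁾(ξ₁₀)/n!, converges absolutely in the norm of ℍ(ℂ) and its sum equals Φ̂(ζ). -/
noncomputable section

set_option maxHeartbeats 1000000

lemma Iq_re : Iq.re = 0 := rfl
lemma Iq_imI : Iq.imI = 1 := rfl
lemma Iq_imJ : Iq.imJ = 0 := rfl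
lemma Iq_imK : Iq.imK = 0 := rfl
lemma Jq_re : Jq.re = 0 := rfl
lemma Jq_imI : Jq.imI = 0 := rfl
lemma Jq_imJ : Jq.imJ = 1 := rfl
lemma Jq_imK : Jq.imK = 0 := rfl
lemma Kq_re : Kq.re = 0 := rfl
lemma Kq_imI : Kq.imI = 0 := rfl
lemma Kq_imJ : Kq.imJ = 0 := rfl
lemma Kq_imK : Kq.imK = 1 := rfl

lemma combo_entries (c₁ c₂ c₃ c₄ : ℂ) :
    c₁ • e1 + c₂ • e2 + c₃ • e3 + c₄ • e4 =
      ⟨(c₁ + c₂)/2, Complex.I * (c₁ - c₂)/2, Complex.I * (c₃ + c₄)/2, (c₄ - c₃)/2⟩ := by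
  ext <;> simp [e1, e2, e3, e4, Iq_re, Iq_imI, Iq_imJ, Iq_imK, Jq_re, Jq_imI, Jq_imJ, Jq_imK, Kq_re, Kq_imI, Kq_imJ, Kq_imK, Quaternion.re_one, Quaternion.imI_one, Quaternion.imJ_one, Quaternion.imK_one, Quaternion.re_smul, Quaternion.imI_smul, Quaternion.imJ_smul, Quaternion.imK_smul] <;> ring

lemma coord1_combo (c₁ c₂ c₃ c₄ : ℂ) : coord1 (c₁ • e1 + c₂ • e2 + c₃ • e3 + c₄ • e4) = c₁ := by
  rw [combo_entries]; simp [coord1]; ring_nf; simp [Complex.I_sq]; ring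
lemma coord2_combo (c₁ c₂ c₃ c₄ : ℂ) : coord2 (c₁ • e1 + c₂ • e2 + c₃ • e3 + c₄ • e4) = c₂ := by
  rw [combo_entries]; simp [coord2]; ring_nf; simp [Complex.I_sq]; ring
lemma coord3_combo (c₁ c₂ c₃ c₄ : ℂ) : coord3 (c₁ • e1 + c₂ • e2 + c₃ • e3 + c₄ • e4) = c₃ := by
  rw [combo_entries]; simp [coord3]; ring_nf; simp [Complex.I_sq]; ring
lemma coord4_combo (c₁ c₂ c₃ c₄ : ℂ) : coord4 (c₁ • e1 + c₂ • e2 + c₃ • e3 + c₄ • e4) = c₄ := by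
  rw [combo_entries]; simp [coord4]; ring_nf; simp [Complex.I_sq]; ring

lemma mul_combo (c₁ c₂ c₃ c₄ w₁ w₂ : ℂ) :
    (c₁ • e1 + c₂ • e2 + c₃ • e3 + c₄ • e4) * (w₁ • e1 + w₂ • e2) =
      (c₁*w₁) • e1 + (c₂*w₂) • e2 + (c₃*w₂) • e3 + (c₄*w₁) • e4 := by
  ext <;> simp [e1, e2, e3, e4, Iq_re, Iq_imI, Iq_imJ, Iq_imK, Jq_re, Jq_imI, Jq_imJ, Jq_imK, Kq_re, Kq_imI, Kq_imJ, Kq_imK, Quaternion.re_mul, Quaternion.imI_mul,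
    Quaternion.imJ_mul, Quaternion.imK_mul, Quaternion.re_one, Quaternion.imI_one, Quaternion.imJ_one, Quaternion.imK_one, Quaternion.re_smul, Quaternion.imI_smul, Quaternion.imJ_smul, Quaternion.imK_smul] <;> ring_nf <;> simp [Complex.I_sq] <;> ring

lemma hnorm_combo (c₁ c₂ c₃ c₄ : ℂ) :
    hnorm (c₁ • e1 + c₂ • e2 + c₃ • e3 + c₄ • e4) =
      Real.sqrt (‖c₁‖ ^ 2 + ‖c₂‖ ^ 2 +
        ‖c₃‖ ^ 2 + ‖c₄‖ ^ 2) := by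
  rw [hnorm, coord1_combo, coord2_combo, coord3_combo, coord4_combo]

lemma term_eq (c₁ c₂ c₃ c₄ w₁ w₂ : ℂ) (n : ℕ) :
    (c₁ • e1 + c₂ • e2 + c₃ • e3 + c₄ • e4) * (w₁ • e1 + w₂ • e2) ^ n =
      (c₁*w₁^n) • e1 + (c₂*w₂^n) • e2 + (c₃*w₂^n) • e3 + (c₄*w₁^n) • e4 := by
  induction n with
  | zero => simp
  | succ n ih => rw [pow_succ, ← mul_assoc, ih, mul_combo]; ring_nf

lemma combo_sub (u₁ u₂ u₃ u₄ v₁ v₂ v₃ v₄ : ℂ) :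
    (u₁ • e1 + u₂ • e2 + u₃ • e3 + u₄ • e4) - (v₁ • e1 + v₂ • e2 + v₃ • e3 + v₄ • e4) =
      (u₁-v₁) • e1 + (u₂-v₂) • e2 + (u₃-v₃) • e3 + (u₄-v₄) • e4 := by
  module

lemma sum_smul' (f : ℕ → ℂ) (e : HC) (N : ℕ) :
    ∑ n ∈ Finset.range N, f n • e = (∑ n ∈ Finset.range N, f n) • e :=
  (Finset.sum_smul (x := e) (f := f) (s := Finset.range N)).symm

lemma zeta_sub (a₁ a₂ b₁ b₂ : ℂ) (x y z x₀ y₀ z₀ : ℝ) :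
    zeta a₁ a₂ b₁ b₂ x y z - zeta a₁ a₂ b₁ b₂ x₀ y₀ z₀ =
      (xi1 a₁ b₁ x y z - xi1 a₁ b₁ x₀ y₀ z₀) • e1 +
      (xi2 a₂ b₂ x y z - xi2 a₂ b₂ x₀ y₀ z₀) • e2 := by
  ext <;> simp [zeta, i2, i3, xi1, xi2, e1, e2, Iq_re, Iq_imI, Iq_imJ, Iq_imK, Quaternion.re_one, Quaternion.imI_one, Quaternion.imJ_one, Quaternion.imK_one, Quaternion.re_smul, Quaternion.imI_smul, Quaternion.imJ_smul, Quaternion.imK_smul, -Complex.coe_smul] <;> ring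

lemma sqrt_le_sum4 (a b c d : ℝ) (ha : 0 ≤ a) (hb : 0 ≤ b) (hc : 0 ≤ c) (hd : 0 ≤ d) :
    Real.sqrt (a^2 + b^2 + c^2 + d^2) ≤ a + b + c + d := by
  rw [show a + b + c + d = Real.sqrt ((a+b+c+d)^2) from (Real.sqrt_sq (by positivity)).symm]
  apply Real.sqrt_le_sqrt; nlinarith

lemma hasSum_taylor {F : ℂ → ℂ} {c : ℂ} {r : ℝ} (hF : DifferentiableOn ℂ F (Metric.ball c r))
    {z : ℂ} (hz : ‖z - c‖ < r) :
    HasSum (fun n : ℕ => (iteratedDeriv n F c / (Nat.factorial n : ℂ)) * (z - c) ^ n) (F z) := by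
  have h := Complex.hasSum_taylorSeries_on_ball (E := ℂ) hF
    (z := z) (by simpa [Metric.mem_ball, Complex.dist_eq] using hz)
  convert h using 2 with n
  · rfl
  simp [smul_eq_mul]
  ring

lemma summable_abs_taylor {F : ℂ → ℂ} {c : ℂ} {r : ℝ} (hF : DifferentiableOn ℂ F (Metric.ball c r))
    {z : ℂ} (hz : ‖z - c‖ < r) :
    Summable (fun n : ℕ =>
      ‖iteratedDeriv n F c / (Nat.factorial n : ℂ)‖ * ‖z - c‖ ^ n) := by
  set A : ℕ → ℂ := fun n => iteratedDeriv n F c / (Nat.factorial n : ℂ) with hA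
  set s : ℝ := ‖z - c‖ with hs
  have hs0 : 0 ≤ s := norm_nonneg _
  set ρ : ℝ := (s + r) / 2 with hρ
  have hρ1 : s < ρ := by rw [hρ]; linarith
  have hρ2 : ρ < r := by rw [hρ]; linarith
  have hρ0 : 0 < ρ := by linarith
  have hzρ : ‖(c + (ρ:ℂ)) - c‖ < r := by
    simpa [abs_of_pos hρ0] using hρ2
  have hsum := (hasSum_taylor hF hzρ).summable
  have htend : Filter.Tendsto (fun n => ‖A n‖ * ρ ^ n) Filter.atTop (nhds 0) := by
    have h := hsum.tendsto_atTop_zero.norm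
    simp only [norm_mul, norm_pow, add_sub_cancel_left,
      Complex.norm_real, Real.norm_eq_abs, abs_of_pos hρ0, norm_zero] at h
    exact h
  obtain ⟨C, hC⟩ := htend.bddAbove_range
  rw [mem_upperBounds] at hC
  have hC' : ∀ n : ℕ, ‖A n‖ * ρ ^ n ≤ C := fun n => hC _ (Set.mem_range_self n)
  have hgeo : Summable (fun n : ℕ => C * (s / ρ) ^ n) :=
    (summable_geometric_of_lt_one (by positivity)
      (by rw [div_lt_one hρ0]; exact hρ1)).mul_left C
  refine Summable.of_nonneg_of_le (fun n => by positivity) (fun n => ?_) hgeo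
  have h1 : ‖A n‖ * s ^ n = (‖A n‖ * ρ ^ n) * (s / ρ) ^ n := by
    rw [mul_assoc, ← mul_pow, mul_div_cancel₀ s hρ0.ne']
  rw [show ‖iteratedDeriv n F c / (Nat.factorial n : ℂ)‖ = ‖A n‖ from rfl, h1]
  exact mul_le_mul_of_nonneg_right (hC' n) (by positivity)

lemma main_aux (A B C D : ℕ → ℂ) (w₁ w₂ L₁ L₂ L₃ L₄ : ℂ)
    (hA : HasSum (fun n => A n * w₁ ^ n) L₁) (hB : HasSum (fun n => B n * w₂ ^ n) L₂)
    (hC : HasSum (fun n => C n * w₂ ^ n) L₃) (hD : HasSum (fun n => D n * w₁ ^ n) L₄)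
    (sA : Summable fun n => ‖A n‖ * ‖w₁‖ ^ n)
    (sB : Summable fun n => ‖B n‖ * ‖w₂‖ ^ n)
    (sC : Summable fun n => ‖C n‖ * ‖w₂‖ ^ n)
    (sD : Summable fun n => ‖D n‖ * ‖w₁‖ ^ n) :
    Summable (fun n : ℕ => hnorm ((A n • e1 + B n • e2 + C n • e3 + D n • e4) *
        (w₁ • e1 + w₂ • e2) ^ n)) ∧
    SeriesTendsto (fun n : ℕ => (A n • e1 + B n • e2 + C n • e3 + D n • e4) *
        (w₁ • e1 + w₂ • e2) ^ n)
      (L₁ • e1 + L₂ • e2 + L₃ • e3 + L₄ • e4) := by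
  constructor
  · refine Summable.of_nonneg_of_le (fun n => Real.sqrt_nonneg _) (fun n => ?_)
      (((sA.add sB).add sC).add sD)
    rw [term_eq, hnorm_combo]
    have hle := sqrt_le_sum4 (‖A n * w₁ ^ n‖) (‖B n * w₂ ^ n‖)
      (‖C n * w₂ ^ n‖) (‖D n * w₁ ^ n‖)
      (norm_nonneg _) (norm_nonneg _) (norm_nonneg _) (norm_nonneg _)
    simpa [map_mul, map_pow] using hle
  · rw [SeriesTendsto]
    have hps : ∀ N : ℕ,
        (∑ n ∈ Finset.range N, (A n • e1 + B n • e2 + C n • e3 + D n • e4) *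
          (w₁ • e1 + w₂ • e2) ^ n) - (L₁ • e1 + L₂ • e2 + L₃ • e3 + L₄ • e4) =
        ((∑ n ∈ Finset.range N, A n * w₁ ^ n) - L₁) • e1 +
        ((∑ n ∈ Finset.range N, B n * w₂ ^ n) - L₂) • e2 +
        ((∑ n ∈ Finset.range N, C n * w₂ ^ n) - L₃) • e3 +
        ((∑ n ∈ Finset.range N, D n * w₁ ^ n) - L₄) • e4 := by
      intro N
      simp only [term_eq]
      rw [Finset.sum_add_distrib, Finset.sum_add_distrib, Finset.sum_add_distrib,
        sum_smul', sum_smul', sum_smul', sum_smul', combo_sub]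
    have heq : (fun N : ℕ => hnorm ((∑ n ∈ Finset.range N,
          (A n • e1 + B n • e2 + C n • e3 + D n • e4) * (w₁ • e1 + w₂ • e2) ^ n) -
          (L₁ • e1 + L₂ • e2 + L₃ • e3 + L₄ • e4))) =
        fun N : ℕ => Real.sqrt
          (‖(∑ n ∈ Finset.range N, A n * w₁ ^ n) - L₁‖ ^ 2 +
           ‖(∑ n ∈ Finset.range N, B n * w₂ ^ n) - L₂‖ ^ 2 +
           ‖(∑ n ∈ Finset.range N, C n * w₂ ^ n) - L₃‖ ^ 2 +
           ‖(∑ n ∈ Finset.range N, D n * w₁ ^ n) - L₄‖ ^ 2) := by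
      funext N; rw [hps N, hnorm_combo]
    rw [heq]
    have t : ∀ (f : ℕ → ℂ) (L : ℂ), HasSum f L →
        Filter.Tendsto (fun N => ‖(∑ n ∈ Finset.range N, f n) - L‖ ^ 2)
          Filter.atTop (nhds 0) := by
      intro f L hf
      have h1 := (hf.tendsto_sum_nat.sub_const L).norm
      simp only [sub_self, norm_zero] at h1
      simpa using h1.pow 2
    have tsum := (((t _ _ hA).add (t _ _ hB)).add (t _ _ hC)).add (t _ _ hD)
    simp only [add_zero] at tsum
    have := (Real.continuous_sqrt.tendsto 0).comp tsum
    simpa [Function.comp_def] using this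

/-- Taylor expansion, left version: if F̂₁, F̂₄ are holomorphic on
U(ξ₁₀,R) and F̂₂, F̂₃ on U(ξ₂₀,R), and Φ̂(ζ) = F̂₁(ξ₁)e₁ + F̂₂(ξ₂)e₂ + F̂₃(ξ₂)e₃ + F̂₄(ξ₁)e₄,
then for every ζ ∈ B(ζ₀,R) the series ∑ₙ p̂ₙ(ζ-ζ₀)ⁿ with p̂ₙ = âₙe₁ + b̂ₙe₂ + ĉₙe₃ + d̂ₙe₄,
âₙ = F̂₁⁽ⁿ⁾(ξ₁₀)/n!, b̂ₙ = F̂₂⁽ⁿ⁾(ξ₂₀)/n!, ĉₙ = F̂₃⁽ⁿ⁾(ξ₂₀)/n!, d̂ₙ = F̂₄⁽ⁿ⁾(ξ₁₀)/n!,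
converges absolutely in the norm of ℍ(ℂ) and its sum is Φ̂(ζ). -/
theorem taylor_left (a₁ a₂ b₁ b₂ : ℂ) (x₀ y₀ z₀ : ℝ) (R : ℝ) (hR : 0 < R)
    (F₁ F₂ F₃ F₄ : ℂ → ℂ)
    (hF₁ : DifferentiableOn ℂ F₁ (Metric.ball (xi1 a₁ b₁ x₀ y₀ z₀) R))
    (hF₄ : DifferentiableOn ℂ F₄ (Metric.ball (xi1 a₁ b₁ x₀ y₀ z₀) R))
    (hF₂ : DifferentiableOn ℂ F₂ (Metric.ball (xi2 a₂ b₂ x₀ y₀ z₀) R))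
    (hF₃ : DifferentiableOn ℂ F₃ (Metric.ball (xi2 a₂ b₂ x₀ y₀ z₀) R))
    (x y z : ℝ)
    (h₁ : ‖xi1 a₁ b₁ x y z - xi1 a₁ b₁ x₀ y₀ z₀‖ < R)
    (h₂ : ‖xi2 a₂ b₂ x y z - xi2 a₂ b₂ x₀ y₀ z₀‖ < R) :
    Summable (fun n : ℕ =>
      hnorm (((iteratedDeriv n F₁ (xi1 a₁ b₁ x₀ y₀ z₀) / (Nat.factorial n : ℂ)) • e1 +
         (iteratedDeriv n F₂ (xi2 a₂ b₂ x₀ y₀ z₀) / (Nat.factorial n : ℂ)) • e2 +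
         (iteratedDeriv n F₃ (xi2 a₂ b₂ x₀ y₀ z₀) / (Nat.factorial n : ℂ)) • e3 +
         (iteratedDeriv n F₄ (xi1 a₁ b₁ x₀ y₀ z₀) / (Nat.factorial n : ℂ)) • e4) *
        (zeta a₁ a₂ b₁ b₂ x y z - zeta a₁ a₂ b₁ b₂ x₀ y₀ z₀) ^ n)) ∧
    SeriesTendsto (fun n : ℕ =>
      ((iteratedDeriv n F₁ (xi1 a₁ b₁ x₀ y₀ z₀) / (Nat.factorial n : ℂ)) • e1 +
         (iteratedDeriv n F₂ (xi2 a₂ b₂ x₀ y₀ z₀) / (Nat.factorial n : ℂ)) • e2 +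
         (iteratedDeriv n F₃ (xi2 a₂ b₂ x₀ y₀ z₀) / (Nat.factorial n : ℂ)) • e3 +
         (iteratedDeriv n F₄ (xi1 a₁ b₁ x₀ y₀ z₀) / (Nat.factorial n : ℂ)) • e4) *
        (zeta a₁ a₂ b₁ b₂ x y z - zeta a₁ a₂ b₁ b₂ x₀ y₀ z₀) ^ n)
      (F₁ (xi1 a₁ b₁ x y z) • e1 + F₂ (xi2 a₂ b₂ x y z) • e2 +
       F₃ (xi2 a₂ b₂ x y z) • e3 + F₄ (xi1 a₁ b₁ x y z) • e4) := by
  have hA := hasSum_taylor hF₁ h₁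
  have hD := hasSum_taylor hF₄ h₁
  have hB := hasSum_taylor hF₂ h₂
  have hC := hasSum_taylor hF₃ h₂
  have sA := summable_abs_taylor hF₁ h₁
  have sD := summable_abs_taylor hF₄ h₁
  have sB := summable_abs_taylor hF₂ h₂
  have sC := summable_abs_taylor hF₃ h₂
  have main := main_aux
    (fun n => iteratedDeriv n F₁ (xi1 a₁ b₁ x₀ y₀ z₀) / (Nat.factorial n : ℂ))
    (fun n => iteratedDeriv n F₂ (xi2 a₂ b₂ x₀ y₀ z₀) / (Nat.factorial n : ℂ))
    (fun n => iteratedDeriv n F₃ (xi2 a₂ b₂ x₀ y₀ z₀) / (Nat.factorial n : ℂ))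
    (fun n => iteratedDeriv n F₄ (xi1 a₁ b₁ x₀ y₀ z₀) / (Nat.factorial n : ℂ))
    (xi1 a₁ b₁ x y z - xi1 a₁ b₁ x₀ y₀ z₀) (xi2 a₂ b₂ x y z - xi2 a₂ b₂ x₀ y₀ z₀)
    (F₁ (xi1 a₁ b₁ x y z)) (F₂ (xi2 a₂ b₂ x y z)) (F₃ (xi2 a₂ b₂ x y z)) (F₄ (xi1 a₁ b₁ x y z))
    hA hB hC hD sA sB sC sD
  simpa only [zeta_sub] using main
end
end

section
/- (Classification of singularities, removable case.) Assume i₁, i₂, i₃ are linearly independent over ℝ and f₁(E₃) = f₂(E₃) = ℂ. Let ζ₀ ∈ E₃, ξ₁₀ = f₁(ζ₀), ξ₂₀ = f₂(ζ₀), 0 < R ≤ ∞. Let F₁, F₃ be holomorphic on the punctured disk {ξ : 0 < |ξ − ξ₁₀| < R} and F₂, F₄ holomorphic on {ξ : 0 < |ξ − ξ₂₀| < R}, and define Φ on K⁰_ζ = {ζ ∈ E₃ : 0 < |f₁(ζ) − ξ₁₀| < R, 0 < |f₂(ζ) − ξ₂₀| < R} by Φ(ζ) = F₁(f₁(ζ))e₁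 + F₂(f₂(ζ))e₂ + F₃(f₁(ζ))e₃ + F₄(f₂(ζ))e₄. If all Laurent coefficients of F₁, F₂, F₃, F₄ of negative index vanish (i.e., the Laurent expansion of Φ has no principal part), then at every point w ∈ K̃⁰_ζ = {ζ ∈ E₃ : |f₁(ζ) − ξ₁₀| < R, |f₂(ζ) − ξ₂₀| < R} of the form w = ζ₀ + e* with e* ∈ L¹_ζ ∪ L²_ζ, the mapping Φ has a finite limit as ζ → w with ζ ranging over K⁰_ζ. -/
noncomputable section

/-- The punctured domain K⁰_ζ = {ζ ∈ E₃ : 0 < |f₁(ζ)-ξ₁₀| < R, 0 < |f₂(ζ)-ξ₂₀| < R}. -/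
def K0 (a₁ a₂ b₁ b₂ ξ₁₀ ξ₂₀ : ℂ) (R : ENNReal) : Set HC :=
  {q | ∃ x y z : ℝ, q = zeta a₁ a₂ b₁ b₂ x y z ∧
    0 < ‖xi1 a₁ b₁ x y z - ξ₁₀‖ ∧
    ENNReal.ofReal (‖xi1 a₁ b₁ x y z - ξ₁₀‖) < R ∧
    0 < ‖xi2 a₂ b₂ x y z - ξ₂₀‖ ∧
    ENNReal.ofReal (‖xi2 a₂ b₂ x y z - ξ₂₀‖) < R}

/-- Φ has the finite limit A as ζ → w with ζ ranging over S (w.r.t. the norm of ℍ(ℂ)). -/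
def TendstoAt (Φ : HC → HC) (S : Set HC) (w A : HC) : Prop :=
  ∀ ε > (0 : ℝ), ∃ δ > (0 : ℝ), ∀ q ∈ S, hnorm (q - w) < δ → hnorm (Φ q - A) < ε

/-- ‖Φ(ζ)‖ → ∞ as ζ → w with ζ ranging over S. -/
def TendstoInftyAt (Φ : HC → HC) (S : Set HC) (w : HC) : Prop :=
  ∀ M : ℝ, ∃ δ > (0 : ℝ), ∀ q ∈ S, hnorm (q - w) < δ → M < hnorm (Φ q)

open Filter Topology in
private lemma key_limit (a : ℕ → ℂ) (ξc : ℂ) (R : ENNReal) (F : ℂ → ℂ)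
    (h : ∀ ξ : ℂ, 0 < ‖ξ - ξc‖ → ENNReal.ofReal (‖ξ - ξc‖) < R →
      HasSum (fun n : ℕ => a n * (ξ - ξc) ^ n) (F ξ))
    (ξs : ℂ) (hs : ENNReal.ofReal (‖ξs - ξc‖) < R) :
    ∃ L : ℂ, ∀ ε > (0:ℝ), ∃ δ > (0:ℝ), ∀ ξ : ℂ,
      0 < ‖ξ - ξc‖ → ENNReal.ofReal (‖ξ - ξc‖) < R →
      ‖ξ - ξs‖ < δ → ‖F ξ - L‖ < ε := by
  set p : FormalMultilinearSeries ℂ ℂ ℂ :=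
    fun n => ContinuousMultilinearMap.mkPiRing ℂ (Fin n) (a n) with hp
  have hpn : ∀ (n : ℕ) (w : ℂ), (p n fun _ => w) = a n * w ^ n := by
    intro n w
    simp [hp, ContinuousMultilinearMap.mkPiRing_apply, smul_eq_mul]
    ring
  have hrad : R ≤ p.radius := by
    apply ENNReal.le_of_forall_nnreal_lt
    intro r hr
    rcases eq_or_lt_of_le (zero_le : (0:NNReal) ≤ r) with h0 | h0
    · rw [← h0]; simp
    · have hmem1 : 0 < ‖((ξc + (r : ℝ)) - ξc)‖ := by
        simpa using (by exact_mod_cast h0 : (0:ℝ) < (r:ℝ))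
      have hmem2 : ENNReal.ofReal (‖((ξc + (r : ℝ)) - ξc)‖) < R := by
        have : ‖((ξc + (r : ℝ)) - ξc)‖ = (r : ℝ) := by
          simp [Complex.norm_real, abs_of_pos (by exact_mod_cast h0 : (0:ℝ) < (r:ℝ))]
        rw [this]
        simpa [ENNReal.ofReal_coe_nnreal] using hr
      have hsum := (h _ hmem1 hmem2).summable
      have htend := hsum.tendsto_atTop_zero
      apply p.le_radius_of_tendsto (l := 0)
      have : (fun n : ℕ => ‖p n‖ * (r : ℝ) ^ n) =
          fun n : ℕ => ‖a n * ((ξc + (r:ℝ)) - ξc) ^ n‖ := by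
        funext n
        rw [hp]
        simp [ContinuousMultilinearMap.norm_mkPiRing, norm_mul, norm_pow,
          Complex.norm_real, abs_of_nonneg (r.coe_nonneg)]
      rw [this]
      simpa using htend.norm
  have hmem : (ξs - ξc) ∈ Metric.eball (0 : ℂ) p.radius := by
    rw [Metric.mem_eball, edist_zero_right, ← ofReal_norm]
    calc ENNReal.ofReal ‖ξs - ξc‖ < R := by exact hs
      _ ≤ p.radius := hrad
  refine ⟨p.sum (ξs - ξc), ?_⟩
  have hcont : ContinuousAt p.sum (ξs - ξc) :=
    (FormalMultilinearSeries.continuousOn (p := p)).continuousAt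
      (Metric.isOpen_eball.mem_nhds hmem)
  intro ε hε
  rcases Metric.continuousAt_iff.mp hcont ε hε with ⟨δ, hδ, hδ'⟩
  refine ⟨δ, hδ, ?_⟩
  intro ξ h1 h2 h3
  have hmemξ : (ξ - ξc) ∈ Metric.eball (0 : ℂ) p.radius := by
    rw [Metric.mem_eball, edist_zero_right, ← ofReal_norm]
    calc ENNReal.ofReal ‖ξ - ξc‖ < R := by exact h2
      _ ≤ p.radius := hrad
  have hFeq : F ξ = p.sum (ξ - ξc) := by
    have := p.hasSum hmemξ
    simp only [hpn] at this
    exact (h ξ h1 h2).unique this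
  have hd : dist (ξ - ξc) (ξs - ξc) < δ := by
    rw [Complex.dist_eq]
    simpa [sub_sub_sub_cancel_right] using h3
  have := hδ' hd
  rw [Complex.dist_eq] at this
  rw [hFeq]
  simpa using this

private lemma hasSum_nat_of_int (a : ℤ → ℂ) (hneg : ∀ n : ℤ, n < 0 → a n = 0) {w s : ℂ}
    (h : HasSum (fun n : ℤ => a n * w ^ n) s) : HasSum (fun n : ℕ => a n * w ^ n) s := by
  have hzero : ∀ x : ℤ, x ∉ Set.range ((↑) : ℕ → ℤ) → a x * w ^ x = 0 := by
    intro x hx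
    have hx0 : x < 0 := by
      by_contra hge
      exact hx ⟨x.toNat, Int.toNat_of_nonneg (not_lt.mp hge)⟩
    rw [hneg x hx0, zero_mul]
  have := (Function.Injective.hasSum_iff (fun m n h => by exact_mod_cast h : Function.Injective ((↑) : ℕ → ℤ)) hzero).mpr h
  have heq : ((fun n : ℤ => a n * w ^ n) ∘ ((↑) : ℕ → ℤ)) =
      fun n : ℕ => a n * w ^ n := by
    funext n
    simp [zpow_natCast]
  rwa [heq] at this

private def combo (c1 c2 c3 c4 : ℂ) : HC := c1 • e1 + c2 • e2 + c3 • e3 + c4 • e4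

private lemma coord1_combo_s16 (c1 c2 c3 c4 : ℂ) : coord1 (combo c1 c2 c3 c4) = c1 := by
  simp [combo, coord1, e1, e2, e3, e4, Complex.ext_iff, Quaternion.re_one, Quaternion.imI_one, Quaternion.imJ_one, Quaternion.imK_one]
  simp [Iq, Jq, Kq]
  constructor <;> ring

private lemma coord2_combo_s16 (c1 c2 c3 c4 : ℂ) : coord2 (combo c1 c2 c3 c4) = c2 := by
  simp [combo, coord2, e1, e2, e3, e4, Complex.ext_iff, Quaternion.re_one, Quaternion.imI_one, Quaternion.imJ_one, Quaternion.imK_one]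
  simp [Iq, Jq, Kq]
  constructor <;> ring

private lemma coord3_combo_s16 (c1 c2 c3 c4 : ℂ) : coord3 (combo c1 c2 c3 c4) = c3 := by
  simp [combo, coord3, e1, e2, e3, e4, Complex.ext_iff, Quaternion.re_one, Quaternion.imI_one, Quaternion.imJ_one, Quaternion.imK_one]
  simp [Iq, Jq, Kq]
  constructor <;> ring

private lemma coord4_combo_s16 (c1 c2 c3 c4 : ℂ) : coord4 (combo c1 c2 c3 c4) = c4 := by
  simp [combo, coord4, e1, e2, e3, e4, Complex.ext_iff, Quaternion.re_one, Quaternion.imI_one, Quaternion.imJ_one, Quaternion.imK_one]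
  simp [Iq, Jq, Kq]
  constructor <;> ring

private lemma hnorm_combo_s16 (c1 c2 c3 c4 : ℂ) :
    hnorm (combo c1 c2 c3 c4) = Real.sqrt (‖c1‖ ^ 2 + ‖c2‖ ^ 2 +
      ‖c3‖ ^ 2 + ‖c4‖ ^ 2) := by
  rw [hnorm, coord1_combo_s16, coord2_combo_s16, coord3_combo_s16, coord4_combo_s16]

private lemma e1_add_e2 : e1 + e2 = 1 := by
  simp only [e1, e2, smul_smul]
  ext <;> simp [Iq, Quaternion.re_one, Quaternion.imI_one, Quaternion.imJ_one, Quaternion.imK_one] <;> norm_num <;> ring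

private lemma combo_sub_s16 (c1 c2 c3 c4 d1 d2 d3 d4 : ℂ) :
    combo c1 c2 c3 c4 - combo d1 d2 d3 d4 = combo (c1-d1) (c2-d2) (c3-d3) (c4-d4) := by
  simp only [combo]; module

private lemma zeta_combo (a₁ a₂ b₁ b₂ : ℂ) (x y z : ℝ) :
    zeta a₁ a₂ b₁ b₂ x y z = combo (xi1 a₁ b₁ x y z) (xi2 a₂ b₂ x y z) 0 0 := by
  rw [zeta, i2, i3, xi1, xi2, combo, ← e1_add_e2]
  module

private lemma zeta_add' (a₁ a₂ b₁ b₂ : ℂ) (x y z u v t : ℝ) :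
    zeta a₁ a₂ b₁ b₂ x y z + zeta a₁ a₂ b₁ b₂ u v t =
      zeta a₁ a₂ b₁ b₂ (x+u) (y+v) (z+t) := by
  simp only [zeta]
  push_cast
  module

private lemma xi1_add' (a₁ b₁ : ℂ) (x y z u v t : ℝ) :
    xi1 a₁ b₁ (x+u) (y+v) (z+t) = xi1 a₁ b₁ x y z + xi1 a₁ b₁ u v t := by
  simp only [xi1]; push_cast; ring

private lemma xi2_add' (a₂ b₂ : ℂ) (x y z u v t : ℝ) :
    xi2 a₂ b₂ (x+u) (y+v) (z+t) = xi2 a₂ b₂ x y z + xi2 a₂ b₂ u v t := by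
  simp only [xi2]; push_cast; ring

/-- Classification of singularities, removable case: if the Laurent
expansion of Φ has no principal part, then at every point w = ζ₀ + e* of K̃⁰_ζ with
e* ∈ L¹_ζ ∪ L²_ζ the mapping Φ has a finite limit as ζ → w, ζ ∈ K⁰_ζ. -/
theorem singularity_removable
    (a₁ a₂ b₁ b₂ : ℂ)
    (hind : ∀ α β γ : ℝ,
      (α : ℂ) • (1 : HC) + (β : ℂ) • i2 a₁ a₂ + (γ : ℂ) • i3 b₁ b₂ = 0 →
        α = 0 ∧ β = 0 ∧ γ = 0)
    (hsurj1 : ∀ w : ℂ, ∃ x y z : ℝ, w = xi1 a₁ b₁ x y z)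
    (hsurj2 : ∀ w : ℂ, ∃ x y z : ℝ, w = xi2 a₂ b₂ x y z)
    (x₀ y₀ z₀ : ℝ) (R : ENNReal) (hR : 0 < R)
    (F₁ F₂ F₃ F₄ : ℂ → ℂ)
    (hF₁ : DifferentiableOn ℂ F₁
      {ξ : ℂ | 0 < ‖ξ - xi1 a₁ b₁ x₀ y₀ z₀‖ ∧
        ENNReal.ofReal (‖ξ - xi1 a₁ b₁ x₀ y₀ z₀‖) < R})
    (hF₃ : DifferentiableOn ℂ F₃
      {ξ : ℂ | 0 < ‖ξ - xi1 a₁ b₁ x₀ y₀ z₀‖ ∧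
        ENNReal.ofReal (‖ξ - xi1 a₁ b₁ x₀ y₀ z₀‖) < R})
    (hF₂ : DifferentiableOn ℂ F₂
      {ξ : ℂ | 0 < ‖ξ - xi2 a₂ b₂ x₀ y₀ z₀‖ ∧
        ENNReal.ofReal (‖ξ - xi2 a₂ b₂ x₀ y₀ z₀‖) < R})
    (hF₄ : DifferentiableOn ℂ F₄
      {ξ : ℂ | 0 < ‖ξ - xi2 a₂ b₂ x₀ y₀ z₀‖ ∧
        ENNReal.ofReal (‖ξ - xi2 a₂ b₂ x₀ y₀ z₀‖) < R})
    (Φ : HC → HC)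
    (hΦ : ∀ x y z : ℝ,
      0 < ‖xi1 a₁ b₁ x y z - xi1 a₁ b₁ x₀ y₀ z₀‖ →
      ENNReal.ofReal (‖xi1 a₁ b₁ x y z - xi1 a₁ b₁ x₀ y₀ z₀‖) < R →
      0 < ‖xi2 a₂ b₂ x y z - xi2 a₂ b₂ x₀ y₀ z₀‖ →
      ENNReal.ofReal (‖xi2 a₂ b₂ x y z - xi2 a₂ b₂ x₀ y₀ z₀‖) < R →
      Φ (zeta a₁ a₂ b₁ b₂ x y z) =
        F₁ (xi1 a₁ b₁ x y z) • e1 + F₂ (xi2 a₂ b₂ x y z) • e2 +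
        F₃ (xi1 a₁ b₁ x y z) • e3 + F₄ (xi2 a₂ b₂ x y z) • e4)
    (a b c d : ℤ → ℂ)
    (ha : ∀ ξ : ℂ, 0 < ‖ξ - xi1 a₁ b₁ x₀ y₀ z₀‖ →
      ENNReal.ofReal (‖ξ - xi1 a₁ b₁ x₀ y₀ z₀‖) < R →
      HasSum (fun n : ℤ => a n * (ξ - xi1 a₁ b₁ x₀ y₀ z₀) ^ n) (F₁ ξ))
    (hc : ∀ ξ : ℂ, 0 < ‖ξ - xi1 a₁ b₁ x₀ y₀ z₀‖ →
      ENNReal.ofReal (‖ξ - xi1 a₁ b₁ x₀ y₀ z₀‖) < R →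
      HasSum (fun n : ℤ => c n * (ξ - xi1 a₁ b₁ x₀ y₀ z₀) ^ n) (F₃ ξ))
    (hb : ∀ ξ : ℂ, 0 < ‖ξ - xi2 a₂ b₂ x₀ y₀ z₀‖ →
      ENNReal.ofReal (‖ξ - xi2 a₂ b₂ x₀ y₀ z₀‖) < R →
      HasSum (fun n : ℤ => b n * (ξ - xi2 a₂ b₂ x₀ y₀ z₀) ^ n) (F₂ ξ))
    (hd : ∀ ξ : ℂ, 0 < ‖ξ - xi2 a₂ b₂ x₀ y₀ z₀‖ →
      ENNReal.ofReal (‖ξ - xi2 a₂ b₂ x₀ y₀ z₀‖) < R →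
      HasSum (fun n : ℤ => d n * (ξ - xi2 a₂ b₂ x₀ y₀ z₀) ^ n) (F₄ ξ))
    (hneg : ∀ n : ℤ, n < 0 → a n = 0 ∧ b n = 0 ∧ c n = 0 ∧ d n = 0) :
    ∀ u v t : ℝ, (xi1 a₁ b₁ u v t = 0 ∨ xi2 a₂ b₂ u v t = 0) →
      ENNReal.ofReal (‖xi1 a₁ b₁ u v t‖) < R →
      ENNReal.ofReal (‖xi2 a₂ b₂ u v t‖) < R →
      ∃ A : HC, TendstoAt Φ (K0 a₁ a₂ b₁ b₂ (xi1 a₁ b₁ x₀ y₀ z₀) (xi2 a₂ b₂ x₀ y₀ z₀) R)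
        (zeta a₁ a₂ b₁ b₂ x₀ y₀ z₀ + zeta a₁ a₂ b₁ b₂ u v t) A := by
  intro u v t _ hu1 hu2
  have haN : ∀ ξ : ℂ, 0 < ‖ξ - xi1 a₁ b₁ x₀ y₀ z₀‖ →
      ENNReal.ofReal (‖ξ - xi1 a₁ b₁ x₀ y₀ z₀‖) < R →
      HasSum (fun n : ℕ => a n * (ξ - xi1 a₁ b₁ x₀ y₀ z₀) ^ n) (F₁ ξ) :=
    fun ξ h1 h2 => hasSum_nat_of_int a (fun n hn => (hneg n hn).1) (ha ξ h1 h2)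
  have hbN : ∀ ξ : ℂ, 0 < ‖ξ - xi2 a₂ b₂ x₀ y₀ z₀‖ →
      ENNReal.ofReal (‖ξ - xi2 a₂ b₂ x₀ y₀ z₀‖) < R →
      HasSum (fun n : ℕ => b n * (ξ - xi2 a₂ b₂ x₀ y₀ z₀) ^ n) (F₂ ξ) :=
    fun ξ h1 h2 => hasSum_nat_of_int b (fun n hn => (hneg n hn).2.1) (hb ξ h1 h2)
  have hcN : ∀ ξ : ℂ, 0 < ‖ξ - xi1 a₁ b₁ x₀ y₀ z₀‖ →
      ENNReal.ofReal (‖ξ - xi1 a₁ b₁ x₀ y₀ z₀‖) < R →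
      HasSum (fun n : ℕ => c n * (ξ - xi1 a₁ b₁ x₀ y₀ z₀) ^ n) (F₃ ξ) :=
    fun ξ h1 h2 => hasSum_nat_of_int c (fun n hn => (hneg n hn).2.2.1) (hc ξ h1 h2)
  have hdN : ∀ ξ : ℂ, 0 < ‖ξ - xi2 a₂ b₂ x₀ y₀ z₀‖ →
      ENNReal.ofReal (‖ξ - xi2 a₂ b₂ x₀ y₀ z₀‖) < R →
      HasSum (fun n : ℕ => d n * (ξ - xi2 a₂ b₂ x₀ y₀ z₀) ^ n) (F₄ ξ) :=
    fun ξ h1 h2 => hasSum_nat_of_int d (fun n hn => (hneg n hn).2.2.2) (hd ξ h1 h2)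
  obtain ⟨L₁, hL₁⟩ := key_limit (fun n : ℕ => a n) (xi1 a₁ b₁ x₀ y₀ z₀) R F₁ haN
    (xi1 a₁ b₁ x₀ y₀ z₀ + xi1 a₁ b₁ u v t) (by simpa [add_sub_cancel_left] using hu1)
  obtain ⟨L₂, hL₂⟩ := key_limit (fun n : ℕ => b n) (xi2 a₂ b₂ x₀ y₀ z₀) R F₂ hbN
    (xi2 a₂ b₂ x₀ y₀ z₀ + xi2 a₂ b₂ u v t) (by simpa [add_sub_cancel_left] using hu2)
  obtain ⟨L₃, hL₃⟩ := key_limit (fun n : ℕ => c n) (xi1 a₁ b₁ x₀ y₀ z₀) R F₃ hcN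
    (xi1 a₁ b₁ x₀ y₀ z₀ + xi1 a₁ b₁ u v t) (by simpa [add_sub_cancel_left] using hu1)
  obtain ⟨L₄, hL₄⟩ := key_limit (fun n : ℕ => d n) (xi2 a₂ b₂ x₀ y₀ z₀) R F₄ hdN
    (xi2 a₂ b₂ x₀ y₀ z₀ + xi2 a₂ b₂ u v t) (by simpa [add_sub_cancel_left] using hu2)
  refine ⟨combo L₁ L₂ L₃ L₄, ?_⟩
  intro ε hε
  obtain ⟨δ₁, hδ₁, hB₁⟩ := hL₁ (ε/2) (by linarith)
  obtain ⟨δ₂, hδ₂, hB₂⟩ := hL₂ (ε/2) (by linarith)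
  obtain ⟨δ₃, hδ₃, hB₃⟩ := hL₃ (ε/2) (by linarith)
  obtain ⟨δ₄, hδ₄, hB₄⟩ := hL₄ (ε/2) (by linarith)
  refine ⟨min (min δ₁ δ₂) (min δ₃ δ₄), by positivity, ?_⟩
  rintro q ⟨x, y, z, rfl, h1, h2, h3, h4⟩ hq
  have hw : zeta a₁ a₂ b₁ b₂ x₀ y₀ z₀ + zeta a₁ a₂ b₁ b₂ u v t =
      combo (xi1 a₁ b₁ x₀ y₀ z₀ + xi1 a₁ b₁ u v t)
        (xi2 a₂ b₂ x₀ y₀ z₀ + xi2 a₂ b₂ u v t) 0 0 := by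
    rw [zeta_add', zeta_combo, xi1_add', xi2_add']
  rw [hw, zeta_combo, combo_sub_s16, hnorm_combo_s16] at hq
  set d1 := xi1 a₁ b₁ x y z - (xi1 a₁ b₁ x₀ y₀ z₀ + xi1 a₁ b₁ u v t) with hd1
  set d2 := xi2 a₂ b₂ x y z - (xi2 a₂ b₂ x₀ y₀ z₀ + xi2 a₂ b₂ u v t) with hd2
  have hle1 : ‖d1‖ ≤ Real.sqrt (‖d1‖ ^ 2 + ‖d2‖ ^ 2 +
      ‖(0-0 : ℂ)‖ ^ 2 + ‖(0-0 : ℂ)‖ ^ 2) := by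
    have hsq : ‖d1‖ ^ 2 ≤ ‖d1‖ ^ 2 + ‖d2‖ ^ 2 +
        ‖(0-0 : ℂ)‖ ^ 2 + ‖(0-0 : ℂ)‖ ^ 2 := by
      nlinarith [sq_nonneg (‖d2‖), sq_nonneg (‖(0-0 : ℂ)‖)]
    have := Real.sqrt_le_sqrt hsq
    rwa [Real.sqrt_sq (norm_nonneg d1)] at this
  have hle2 : ‖d2‖ ≤ Real.sqrt (‖d1‖ ^ 2 + ‖d2‖ ^ 2 +
      ‖(0-0 : ℂ)‖ ^ 2 + ‖(0-0 : ℂ)‖ ^ 2) := by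
    have hsq : ‖d2‖ ^ 2 ≤ ‖d1‖ ^ 2 + ‖d2‖ ^ 2 +
        ‖(0-0 : ℂ)‖ ^ 2 + ‖(0-0 : ℂ)‖ ^ 2 := by
      nlinarith [sq_nonneg (‖d1‖), sq_nonneg (‖(0-0 : ℂ)‖)]
    have := Real.sqrt_le_sqrt hsq
    rwa [Real.sqrt_sq (norm_nonneg d2)] at this
  have hd1m : ‖d1‖ < min (min δ₁ δ₂) (min δ₃ δ₄) := lt_of_le_of_lt hle1 hq
  have hd2m : ‖d2‖ < min (min δ₁ δ₂) (min δ₃ δ₄) := lt_of_le_of_lt hle2 hq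
  have hE1 := hB₁ (xi1 a₁ b₁ x y z) h1 h2
    (lt_of_lt_of_le hd1m ((min_le_left _ _).trans (min_le_left _ _)))
  have hE2 := hB₂ (xi2 a₂ b₂ x y z) h3 h4
    (lt_of_lt_of_le hd2m ((min_le_left _ _).trans (min_le_right _ _)))
  have hE3 := hB₃ (xi1 a₁ b₁ x y z) h1 h2
    (lt_of_lt_of_le hd1m ((min_le_right _ _).trans (min_le_left _ _)))
  have hE4 := hB₄ (xi2 a₂ b₂ x y z) h3 h4
    (lt_of_lt_of_le hd2m ((min_le_right _ _).trans (min_le_right _ _)))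
  rw [hΦ x y z h1 h2 h3 h4]
  have hco : F₁ (xi1 a₁ b₁ x y z) • e1 + F₂ (xi2 a₂ b₂ x y z) • e2 +
      F₃ (xi1 a₁ b₁ x y z) • e3 + F₄ (xi2 a₂ b₂ x y z) • e4 =
      combo (F₁ (xi1 a₁ b₁ x y z)) (F₂ (xi2 a₂ b₂ x y z))
        (F₃ (xi1 a₁ b₁ x y z)) (F₄ (xi2 a₂ b₂ x y z)) := rfl
  rw [hco, combo_sub_s16, hnorm_combo_s16, Real.sqrt_lt' hε]
  nlinarith [norm_nonneg (F₁ (xi1 a₁ b₁ x y z) - L₁),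
    norm_nonneg (F₂ (xi2 a₂ b₂ x y z) - L₂),
    norm_nonneg (F₃ (xi1 a₁ b₁ x y z) - L₃),
    norm_nonneg (F₄ (xi2 a₂ b₂ x y z) - L₄)]
end
end
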